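/- Repair of conjunctions of negative constraints: let C_1, …, C_n be finite directed multigraphs and for each i let P_i be a binary relation on directed multigraphs that is total (for every G there is H with P_i G H), decreasing (P_i G H implies there exists an injective morphism H → G), and a repair relation for the negative constraint ∄C_i (P_i G H implies there is no injective morphism C_i → H). Then the sequential composition P_1 ; … ; P_n is total, and whenever (P_1 ; … ; P_n) G H there is no injective morphism C_i → H for any i = 1, …, n. -/

import Mathlib

/-- A directed multigraph: a set of nodes, a set of edges, and source/target maps. -/
structure DMGraph : Type 1 where
  V : Type
  E : Type
  s : E → V
  t : E → V

/-- A morphism of directed multigraphs: maps on nodes and edges compatible with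
sources and targets. -/
structure GraphHom (G H : DMGraph) : Type where
  fV : G.V → H.V
  fE : G.E → H.E
  src : ∀ e, H.s (fE e) = fV (G.s e)
  tgt : ∀ e, H.t (fE e) = fV (G.t e)

/-- Composition of graph morphisms. -/
def GraphHom.comp {G H K : DMGraph} (g : GraphHom H K) (f : GraphHom G H) :
    GraphHom G K where
  fV := g.fV ∘ f.fV
  fE := g.fE ∘ f.fE
  src e := by simp [g.src, f.src]
  tgt e := by simp [g.tgt, f.tgt]

/-- A graph morphism is injective if it is injective on nodes and on edges. -/
def GraphHom.Injective {G H : DMGraph} (f : GraphHom G H) : Prop :=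
  Function.Injective f.fV ∧ Function.Injective f.fE

/-- A graph is finite if its node set and edge set are finite. -/
def DMGraph.Finite (G : DMGraph) : Prop :=
  _root_.Finite G.V ∧ _root_.Finite G.E

/-- Sequential (relational) composition of a list of binary relations. -/
def SeqComp {X : Type*} : List (X → X → Prop) → (X → X → Prop)
  | [] => fun G H => G = H
  | P :: Ps => fun G H => ∃ M, P G M ∧ SeqComp Ps M H


lemma GraphHom.comp_injective {G H K : DMGraph} {g : GraphHom H K} {f : GraphHom G H}
    (hg : g.Injective) (hf : f.Injective) : (g.comp f).Injective :=
  ⟨hg.1.comp hf.1, hg.2.comp hf.2⟩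

lemma seqComp_total {X : Type*} (L : List (X → X → Prop))
    (h : ∀ Q ∈ L, ∀ G, ∃ H, Q G H) : ∀ G, ∃ H, SeqComp L G H := by
  induction L with
  | nil => exact fun G => ⟨G, rfl⟩
  | cons Q Ps ih =>
    intro G
    obtain ⟨M, hM⟩ := h Q (List.mem_cons_self) G
    obtain ⟨H, hH⟩ := ih (fun R hR => h R (List.mem_cons_of_mem _ hR)) M
    exact ⟨H, M, hM, hH⟩

lemma seqComp_dec (L : List (DMGraph → DMGraph → Prop))
    (h : ∀ Q ∈ L, ∀ G H, Q G H → ∃ m : GraphHom H G, m.Injective) :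
    ∀ G H, SeqComp L G H → ∃ m : GraphHom H G, m.Injective := by
  induction L with
  | nil =>
    rintro G H rfl
    exact ⟨⟨id, id, fun _ => rfl, fun _ => rfl⟩, Function.injective_id, Function.injective_id⟩
  | cons Q Ps ih =>
    rintro G H ⟨M, hQ, hPs⟩
    obtain ⟨m1, hm1⟩ := ih (fun R hR => h R (List.mem_cons_of_mem _ hR)) M H hPs
    obtain ⟨m2, hm2⟩ := h Q (List.mem_cons_self) G M hQ
    exact ⟨m2.comp m1, GraphHom.comp_injective hm2 hm1⟩

lemma seqComp_repair (C : DMGraph) (L : List (DMGraph → DMGraph → Prop))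
    (hdec : ∀ Q ∈ L, ∀ G H, Q G H → ∃ m : GraphHom H G, m.Injective)
    (Q : DMGraph → DMGraph → Prop) (hQ : Q ∈ L)
    (hrep : ∀ G H, Q G H → ¬ ∃ q : GraphHom C H, q.Injective) :
    ∀ G H, SeqComp L G H → ¬ ∃ q : GraphHom C H, q.Injective := by
  induction L with
  | nil => cases hQ
  | cons R Ps ih =>
    rintro G H ⟨M, hR, hPs⟩ ⟨q, hq⟩
    rcases List.mem_cons.mp hQ with rfl | hQ'
    · obtain ⟨m, hm⟩ := seqComp_dec Ps (fun S hS => hdec S (List.mem_cons_of_mem _ hS)) M H hPs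
      exact hrep G M hR ⟨m.comp q, GraphHom.comp_injective hm hq⟩
    · exact ih (fun S hS => hdec S (List.mem_cons_of_mem _ hS)) hQ' M H hPs ⟨q, hq⟩

/-- Repair of conjunctions of negative constraints: if each `P i` is total,
decreasing, and a repair relation for the negative constraint `∄ C i`, then the
sequential composition `P 0 ; … ; P (n-1)` is total and every result `H` admits no
injective morphism from any `C i`. -/
theorem negative_conjunction_repair {n : ℕ} (C : Fin n → DMGraph)
    (hC : ∀ i, (C i).Finite)
    (P : Fin n → DMGraph → DMGraph → Prop)
    (htotal : ∀ i, ∀ G, ∃ H, P i G H)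
    (hdec : ∀ i, ∀ G H, P i G H → ∃ m : GraphHom H G, m.Injective)
    (hrepair : ∀ i, ∀ G H, P i G H → ¬ ∃ q : GraphHom (C i) H, q.Injective) :
    (∀ G, ∃ H, SeqComp (List.ofFn P) G H) ∧
    (∀ G H, SeqComp (List.ofFn P) G H →
      ∀ i, ¬ ∃ q : GraphHom (C i) H, q.Injective) := by
  constructor
  · refine seqComp_total _ (fun Q hQ G => ?_)
    obtain ⟨i, rfl⟩ := ((List.mem_ofFn).mp hQ)
    exact htotal i G
  · intro G H hGH i
    refine seqComp_repair (C i) _ (fun Q hQ => ?_) (P i) ?_ (hrepair i) G H hGH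
    · obtain ⟨j, rfl⟩ := ((List.mem_ofFn).mp hQ)
      exact hdec j
    · exact (List.mem_ofFn).mpr ⟨i, rfl⟩
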